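/- Let μ > 0 and 0 < κ_1 ≤ κ_2 < ∞. Let X_1, …, X_M be i.i.d. real-valued random variables with mean μ and κ_1 μ ≤ X_i ≤ κ_2 μ almost surely. Then 0 ≤ log μ − E[log((1/M) Σ_{i=1}^M X_i)] ≤ Var(X_1) / (2 κ_1² μ² M). In particular, the Jensen gap of the logarithm of the sample mean is O(1/M). -/

import Mathlib

open MeasureTheory ProbabilityTheory

lemma log_taylor_lower {a t : ℝ} (ha : 0 < a) (ha1 : a ≤ 1) (hat : a ≤ t) :
    (t - 1) - (t - 1) ^ 2 / (2 * a ^ 2) ≤ Real.log t := by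
  set f : ℝ → ℝ := fun x => Real.log x - (x - 1) + (x - 1) ^ 2 / (2 * a ^ 2) with hf
  have hderiv : ∀ x : ℝ, 0 < x → HasDerivAt f (x⁻¹ - 1 + (x - 1) / a ^ 2) x := by
    intro x hx
    have h1 : HasDerivAt Real.log x⁻¹ x := Real.hasDerivAt_log hx.ne'
    have h2 : HasDerivAt (fun x : ℝ => x - 1) 1 x := (hasDerivAt_id x).sub_const 1
    have h3 : HasDerivAt (fun x : ℝ => (x - 1) ^ 2 / (2 * a ^ 2))
        ((2 * (x - 1) ^ 1 * 1) / (2 * a ^ 2)) x := (h2.pow 2).div_const _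
    refine ((h1.sub h2).add h3).congr_deriv ?_
    ring
  have hcont : ∀ s : Set ℝ, s ⊆ Set.Ioi (0:ℝ) → ContinuousOn f s := by
    intro s hs
    exact ((Real.continuousOn_log.mono (fun x hx => ne_of_gt (hs hx))).sub
        (continuous_id.sub continuous_const).continuousOn).add
      (((continuous_id.sub continuous_const).pow 2).continuousOn.div_const _)
  have hf1 : f 1 = 0 := by simp [hf]
  have key : 0 ≤ f t := by
    rcases le_or_gt t 1 with h | h
    · have hanti : AntitoneOn f (Set.Icc a 1) := by
        apply antitoneOn_of_deriv_nonpos (convex_Icc a 1)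
          (hcont _ (fun x hx => lt_of_lt_of_le ha hx.1))
        · intro x hx
          rw [interior_Icc] at hx
          exact ((hderiv x (ha.trans hx.1)).differentiableAt).differentiableWithinAt
        · intro x hx
          rw [interior_Icc] at hx
          have hx0 : 0 < x := ha.trans hx.1
          rw [(hderiv x hx0).deriv]
          have heq : x⁻¹ - 1 + (x - 1) / a ^ 2 =
              (a ^ 2 * (1 - x) - x * (1 - x)) / (x * a ^ 2) := by
            field_simp; ring
          rw [heq]
          apply div_nonpos_of_nonpos_of_nonneg
          · have haa : a ^ 2 ≤ x := by nlinarith [hx.1]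
            have h1x : (0:ℝ) ≤ 1 - x := by linarith [hx.2]
            nlinarith [mul_le_mul_of_nonneg_right haa h1x]
          · positivity
      have := hanti ⟨hat, h⟩ ⟨ha1, le_refl 1⟩ h
      rw [hf1] at this; linarith
    · have hmono : MonotoneOn f (Set.Ici 1) := by
        apply monotoneOn_of_deriv_nonneg (convex_Ici 1)
          (hcont _ (fun x hx => Set.mem_Ioi.2 (lt_of_lt_of_le one_pos hx)))
        · intro x hx
          rw [interior_Ici] at hx
          exact ((hderiv x (one_pos.trans hx)).differentiableAt).differentiableWithinAt
        · intro x hx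
          rw [interior_Ici] at hx
          have hx0 : (0:ℝ) < x := one_pos.trans hx
          rw [(hderiv x hx0).deriv]
          have heq : x⁻¹ - 1 + (x - 1) / a ^ 2 =
              (x * (x - 1) - a ^ 2 * (x - 1)) / (x * a ^ 2) := by
            field_simp; ring
          rw [heq]
          apply div_nonneg _ (by positivity)
          have hx1 : (1:ℝ) < x := hx
          have haa : a ^ 2 ≤ x := by nlinarith
          have h1x : (0:ℝ) ≤ x - 1 := by linarith
          nlinarith [mul_le_mul_of_nonneg_right haa h1x]
      have := hmono (Set.mem_Ici.2 le_rfl) (Set.mem_Ici.2 h.le) h.le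
      rw [hf1] at this; linarith
  have ht0 : 0 < t := ha.trans_le hat
  simp only [hf] at key
  linarith

lemma log_upper {x m : ℝ} (hx : 0 < x) (hm : 0 < m) :
    Real.log x ≤ Real.log m + (x - m) / m := by
  have h := Real.log_le_sub_one_of_pos (show 0 < x / m by positivity)
  rw [Real.log_div hx.ne' hm.ne'] at h
  have : x / m - 1 = (x - m) / m := by field_simp
  linarith [h, this ▸ h]

lemma log_lower {x m a : ℝ} (hm : 0 < m) (ha : 0 < a) (ha1 : a ≤ 1) (hax : a * m ≤ x) :
    Real.log m + (x - m) / m - (x - m) ^ 2 / (2 * a ^ 2 * m ^ 2) ≤ Real.log x := by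
  have hx : 0 < x := lt_of_lt_of_le (by positivity) hax
  have hat : a ≤ x / m := (le_div_iff₀ hm).2 (by linarith [hax])
  have h := log_taylor_lower ha ha1 hat
  rw [Real.log_div hx.ne' hm.ne'] at h
  have e1 : x / m - 1 = (x - m) / m := by field_simp
  have e2 : ((x - m) / m) ^ 2 / (2 * a ^ 2) = (x - m) ^ 2 / (2 * a ^ 2 * m ^ 2) := by
    rw [div_pow, div_div]; ring_nf
  rw [e1, e2] at h
  linarith

/-- **O(1/M) Jensen gap for the log of a sample mean.**  Let `μm > 0`,
`0 < κ1 ≤ κ2 < ∞`, and let `X 1, …, X M` be i.i.d. real random variables with mean `μm`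
and `κ1 * μm ≤ X i ≤ κ2 * μm` almost surely.  Then
`0 ≤ log μm − E[log ((1/M) ∑ i, X i)] ≤ Var(X 1) / (2 κ1² μm² M)`. -/
theorem jensen_gap_log_sample_mean
    {Ω : Type*} [MeasurableSpace Ω] (P : Measure Ω) [IsProbabilityMeasure P]
    (M : ℕ) (hM : 0 < M)
    (X : Fin M → Ω → ℝ) (hmeas : ∀ i, Measurable (X i))
    (hindep : iIndepFun X P)
    (hident : ∀ i j, IdentDistrib (X i) (X j) P P)
    (μm : ℝ) (hμm : 0 < μm) (hmean : ∀ i, ∫ ω, X i ω ∂P = μm)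
    (κ1 κ2 : ℝ) (hκ1 : 0 < κ1) (hκ12 : κ1 ≤ κ2)
    (hbdd : ∀ i, ∀ᵐ ω ∂P, κ1 * μm ≤ X i ω ∧ X i ω ≤ κ2 * μm) :
    0 ≤ Real.log μm - ∫ ω, Real.log ((M : ℝ)⁻¹ * ∑ i, X i ω) ∂P
      ∧ Real.log μm - ∫ ω, Real.log ((M : ℝ)⁻¹ * ∑ i, X i ω) ∂P
        ≤ variance (X ⟨0, hM⟩) P / (2 * κ1 ^ 2 * μm ^ 2 * M) := by
  
  have hMpos : (0:ℝ) < M := Nat.cast_pos.2 hM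
  -- basic facts about each X i
  have hX2 : ∀ i, MemLp (X i) 2 P := fun i =>
    memLp_of_bounded (hbdd i) (hmeas i).aestronglyMeasurable 2
  have hXint : ∀ i, Integrable (X i) P := fun i => ((hX2 i).integrable one_le_two)
  -- κ1 ≤ 1
  have hκ1le1 : κ1 ≤ 1 := by
    have h0 : κ1 * μm ≤ μm := by
      have h1 := integral_mono_ae (integrable_const (κ1 * μm)) (hXint ⟨0, hM⟩)
        (((hbdd ⟨0, hM⟩)).mono fun ω h => h.1)
      simpa [hmean ⟨0, hM⟩] using h1
    have := (mul_le_mul_iff_of_pos_right hμm).1 (by linarith : κ1 * μm ≤ 1 * μm)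
    exact this
  -- the sample mean
  set Y : Ω → ℝ := fun ω => (M : ℝ)⁻¹ * ∑ i, X i ω with hY
  have hYmeas : Measurable Y := by
    exact (measurable_const.mul (Finset.measurable_sum _ fun i _ => hmeas i))
  have hbddY : ∀ᵐ ω ∂P, κ1 * μm ≤ Y ω ∧ Y ω ≤ κ2 * μm := by
    have := (ae_all_iff).2 hbdd
    filter_upwards [this] with ω hω
    constructor
    · have hlb : (M:ℝ) * (κ1 * μm) ≤ ∑ i, X i ω := by
        calc (M:ℝ) * (κ1 * μm) = ∑ _i : Fin M, κ1 * μm := by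
              simp [Finset.sum_const, Finset.card_univ]
          _ ≤ ∑ i, X i ω := Finset.sum_le_sum fun i _ => (hω i).1
      rw [hY]
      calc κ1 * μm = (M:ℝ)⁻¹ * ((M:ℝ) * (κ1 * μm)) := by field_simp
        _ ≤ (M:ℝ)⁻¹ * ∑ i, X i ω := by
            exact mul_le_mul_of_nonneg_left hlb (by positivity)
    · have hub : ∑ i, X i ω ≤ (M:ℝ) * (κ2 * μm) := by
        calc ∑ i, X i ω ≤ ∑ _i : Fin M, κ2 * μm := Finset.sum_le_sum fun i _ => (hω i).2
          _ = (M:ℝ) * (κ2 * μm) := by simp [Finset.sum_const, Finset.card_univ]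
      rw [hY]
      calc (M:ℝ)⁻¹ * ∑ i, X i ω ≤ (M:ℝ)⁻¹ * ((M:ℝ) * (κ2 * μm)) :=
            mul_le_mul_of_nonneg_left hub (by positivity)
        _ = κ2 * μm := by field_simp
  have hκ1μ : (0:ℝ) < κ1 * μm := by positivity
  -- integrability of Y and log Y and (Y - μm)^2
  have hYint : Integrable Y P :=
    (memLp_of_bounded hbddY hYmeas.aestronglyMeasurable 1).integrable le_rfl
  have hY2 : MemLp Y 2 P := memLp_of_bounded hbddY hYmeas.aestronglyMeasurable 2
  have hlogYint : Integrable (fun ω => Real.log (Y ω)) P := by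
    refine (memLp_of_bounded (a := Real.log (κ1 * μm)) (b := Real.log (κ2 * μm)) ?_
      (Real.measurable_log.comp hYmeas).aestronglyMeasurable 1).integrable le_rfl
    filter_upwards [hbddY] with ω hω
    exact ⟨Real.log_le_log hκ1μ hω.1, Real.log_le_log (hκ1μ.trans_le hω.1) hω.2⟩
  have hsqint : Integrable (fun ω => (Y ω - μm) ^ 2) P := by
    have := (hY2.sub (memLp_const μm)).integrable_sq
    simpa using this
  -- mean of Y
  have hEY : ∫ ω, Y ω ∂P = μm := by
    rw [hY]
    simp only
    rw [integral_const_mul, integral_finset_sum _ fun i _ => hXint i]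
    simp only [hmean, Finset.sum_const, Finset.card_univ, Fintype.card_fin, nsmul_eq_mul]
    field_simp
  -- variance computation : ∫ (Y - μm)^2 = variance (X 0) / M
  have hvarY : ∫ ω, (Y ω - μm) ^ 2 ∂P = variance (X ⟨0, hM⟩) P / M := by
    have h1 : variance Y P = ∫ ω, (Y ω - μm) ^ 2 ∂P := by
      rw [variance_eq_integral hYmeas.aemeasurable, hEY]
    have h2 : Y = ((M:ℝ)⁻¹) • (∑ i, X i) := by
      funext ω
      simp [hY, Finset.sum_apply]
    have h3 : variance Y P = ((M:ℝ)⁻¹) ^ 2 * variance (∑ i, X i) P := by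
      rw [h2, variance_smul]
    have h4 : variance (∑ i, X i) P = ∑ i : Fin M, variance (X i) P :=
      IndepFun.variance_sum (fun i _ => hX2 i)
        (fun i _ j _ hij => hindep.indepFun hij)
    have h5 : ∀ i : Fin M, variance (X i) P = variance (X ⟨0, hM⟩) P := fun i =>
      (hident i ⟨0, hM⟩).variance_eq
    rw [← h1, h3, h4]
    simp only [h5, Finset.sum_const, Finset.card_univ, Fintype.card_fin, nsmul_eq_mul]
    field_simp
  -- upper bound on E log Y
  have hub : ∫ ω, Real.log (Y ω) ∂P ≤ Real.log μm := by
    have hle : ∀ᵐ ω ∂P, Real.log (Y ω) ≤ Real.log μm + (Y ω - μm) / μm := by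
      filter_upwards [hbddY] with ω hω
      exact log_upper (hκ1μ.trans_le hω.1) hμm
    have hA : Integrable (fun ω => (Y ω - μm) / μm) P :=
      (hYint.sub (integrable_const μm)).div_const μm
    have hrint : Integrable (fun ω => Real.log μm + (Y ω - μm) / μm) P :=
      (integrable_const _).add hA
    calc ∫ ω, Real.log (Y ω) ∂P ≤ ∫ ω, (Real.log μm + (Y ω - μm) / μm) ∂P :=
          integral_mono_ae hlogYint hrint hle
      _ = Real.log μm + ((∫ ω, Y ω ∂P) - μm) / μm := by
          rw [integral_add (integrable_const _) hA, integral_const]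
          simp only [measure_univ, ENNReal.toReal_one, smul_eq_mul, one_mul]
          rw [integral_div, integral_sub hYint (integrable_const _), integral_const]
          simp
      _ = Real.log μm := by rw [hEY]; simp
  -- lower bound on E log Y
  have hlb : Real.log μm - (∫ ω, (Y ω - μm) ^ 2 ∂P) / (2 * κ1 ^ 2 * μm ^ 2)
      ≤ ∫ ω, Real.log (Y ω) ∂P := by
    have hge : ∀ᵐ ω ∂P, Real.log μm + (Y ω - μm) / μm - (Y ω - μm) ^ 2 / (2 * κ1 ^ 2 * μm ^ 2)
        ≤ Real.log (Y ω) := by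
      filter_upwards [hbddY] with ω hω
      exact log_lower hμm hκ1 hκ1le1 hω.1
    have hA : Integrable (fun ω => (Y ω - μm) / μm) P :=
      (hYint.sub (integrable_const μm)).div_const μm
    have hAB : Integrable (fun ω => Real.log μm + (Y ω - μm) / μm) P :=
      (integrable_const _).add hA
    have hB : Integrable (fun ω => (Y ω - μm) ^ 2 / (2 * κ1 ^ 2 * μm ^ 2)) P :=
      hsqint.div_const _
    have hlint : Integrable
        (fun ω => Real.log μm + (Y ω - μm) / μm - (Y ω - μm) ^ 2 / (2 * κ1 ^ 2 * μm ^ 2)) P :=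
      hAB.sub hB
    calc Real.log μm - (∫ ω, (Y ω - μm) ^ 2 ∂P) / (2 * κ1 ^ 2 * μm ^ 2)
        = ∫ ω, (Real.log μm + (Y ω - μm) / μm - (Y ω - μm) ^ 2 / (2 * κ1 ^ 2 * μm ^ 2)) ∂P := by
          rw [integral_sub hAB hB, integral_add (integrable_const _) hA, integral_const]
          simp only [measure_univ, ENNReal.toReal_one, smul_eq_mul, one_mul]
          rw [integral_div, integral_sub hYint (integrable_const _), integral_const, hEY,
            integral_div]
          simp
      _ ≤ ∫ ω, Real.log (Y ω) ∂P := integral_mono_ae hlint hlogYint hge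
  have hgoal : ∫ ω, Real.log ((M : ℝ)⁻¹ * ∑ i, X i ω) ∂P = ∫ ω, Real.log (Y ω) ∂P := rfl
  rw [hgoal]
  constructor
  · linarith
  · rw [hvarY] at hlb
    have hpos : (0:ℝ) < 2 * κ1 ^ 2 * μm ^ 2 := by positivity
    have : variance (X ⟨0, hM⟩) P / M / (2 * κ1 ^ 2 * μm ^ 2)
        = variance (X ⟨0, hM⟩) P / (2 * κ1 ^ 2 * μm ^ 2 * M) := by
      rw [div_div, mul_comm]
    linarith [this ▸ hlb]
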